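/- Let c, q₁, q₂ be positive integers with q₁ ≤ q₂, and suppose c·q₁·q₂ - q₁ - q₂ = 1. Then (c·q₁, c·q₂) — i.e. the pair (p₁, p₂) with p₁ = c·q₁ and p₂ = c·q₂ and gcd(p₁,p₂) = c — is one of the pairs (2,3), (2,4), or (3,3). Equivalently: the only solutions (c,q₁,q₂) with c,q₁,q₂ ≥ 1, q₁ ≤ q₂, gcd(q₁,q₂)=1 and c·q₁·q₂ - q₁ - q₂ = 1 are (c,q₁,q₂) = (1,2,3), (2,1,2), and (3,1,1). -/
import Mathlib

/-- the only solutions (c,q₁,q₂) with c,q₁,q₂ ≥ 1, q₁ ≤ q₂,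
gcd(q₁,q₂) = 1 and c·q₁·q₂ - q₁ - q₂ = 1 are (1,2,3), (2,1,2) and (3,1,1);
equivalently the pair (cq₁, cq₂) is (2,3), (2,4) or (3,3). -/
theorem dolgachev_arithmetic_classification
    (c q₁ q₂ : ℕ) (hc : 1 ≤ c) (h1 : 1 ≤ q₁) (hle : q₁ ≤ q₂)
    (hgcd : Nat.gcd q₁ q₂ = 1)
    (heq : c * q₁ * q₂ = q₁ + q₂ + 1) :
    ((c * q₁, c * q₂) = (2, 3) ∨ (c * q₁, c * q₂) = (2, 4) ∨
      (c * q₁, c * q₂) = (3, 3)) ∧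
    ((c, q₁, q₂) = (1, 2, 3) ∨ (c, q₁, q₂) = (2, 1, 2) ∨
      (c, q₁, q₂) = (3, 1, 1)) := by
  have hmul : q₁ * q₂ ≤ c * q₁ * q₂ := by
    calc q₁ * q₂ ≤ c * (q₁ * q₂) := Nat.le_mul_of_pos_left _ hc
    _ = c * q₁ * q₂ := by ring
  have hq1 : q₁ ≤ 2 := by nlinarith
  have hcq : 2 ≤ c * q₁ := by
    rcases Nat.lt_or_ge (c * q₁) 2 with h | h
    · exfalso
      have hc1 : c = 1 := by nlinarith
      have hq1' : q₁ = 1 := by nlinarith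
      subst hc1; subst hq1'; omega
    · exact h
  have h2q : 2 * q₂ ≤ c * q₁ * q₂ := Nat.mul_le_mul_right _ hcq
  have hq2 : q₂ ≤ 3 := by omega
  have hcc : c ≤ c * (q₁ * q₂) := Nat.le_mul_of_pos_right _ (by nlinarith)
  have hcb : c ≤ 6 := by nlinarith
  interval_cases c <;> interval_cases q₁ <;> interval_cases q₂ <;> simp_all
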